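/- A finite simple graph Γ = (V,E) is T₀ (no edge of Γ is a module) if and only if for every pair of distinct vertices u, v ∈ V there exists a clique of Γ containing exactly one of u and v. -/

import Mathlib

/-- A clique of a graph: a maximal set of pairwise adjacent vertices. -/
def IsMaxClique {V : Type*} (Γ : SimpleGraph V) (C : Set V) : Prop :=
  Γ.IsClique C ∧ ∀ D : Set V, Γ.IsClique D → C ⊆ D → C = D

lemma exists_maxClique_superset {V : Type*} [Fintype V] (Γ : SimpleGraph V) (s : Set V)
    (hs : Γ.IsClique s) : ∃ C : Set V, IsMaxClique Γ C ∧ s ⊆ C := by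
  obtain ⟨C, ⟨hC, hsC⟩, hmax⟩ := Set.Finite.exists_maximalFor id
    {C : Set V | Γ.IsClique C ∧ s ⊆ C} (Set.toFinite _) ⟨s, hs, subset_rfl⟩
  exact ⟨C, ⟨hC, fun D hD hCD => hCD.antisymm (hmax ⟨hD, hsC.trans hCD⟩ hCD)⟩, hsC⟩

lemma maxClique_sep {V : Type*} (Γ : SimpleGraph V) {C : Set V} (hC : IsMaxClique Γ C)
    {u v : V} (hu : u ∈ C) (hv : v ∉ C) (huv : Γ.Adj u v) :
    ∃ w : V, w ≠ u ∧ w ≠ v ∧ Γ.Adj w u ∧ ¬ Γ.Adj w v := by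
  by_contra h
  push_neg at h
  have hins : Γ.IsClique (insert v C) := by
    apply hC.1.insert
    intro b hb hbv
    by_cases hbu : b = u
    · subst hbu; exact huv.symm
    · have hbu' : Γ.Adj b u := hC.1 hb hu hbu
      by_contra hadj
      exact hadj ((h b hbu hbv.symm hbu').symm)
  have := hC.2 (insert v C) hins (Set.subset_insert v C)
  exact hv (this ▸ Set.mem_insert v C)

theorem t0_iff_cliques_separate {V : Type*} [Fintype V] (Γ : SimpleGraph V) :
    (∀ u v : V, Γ.Adj u v →
      ∃ w : V, w ≠ u ∧ w ≠ v ∧ Xor' (Γ.Adj w u) (Γ.Adj w v)) ↔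
    (∀ u v : V, u ≠ v → ∃ C : Set V, IsMaxClique Γ C ∧ Xor' (u ∈ C) (v ∈ C)) := by
  constructor
  · intro hT0 u v huv
    by_cases hadj : Γ.Adj u v
    · obtain ⟨w, hwu, hwv, hxor⟩ := hT0 u v hadj
      rcases hxor with ⟨h1, h2⟩ | ⟨h1, h2⟩
      · -- w adjacent to u, not v
        obtain ⟨C, hC, hsub⟩ := exists_maxClique_superset Γ {w, u}
          (by simp [SimpleGraph.isClique_pair, hwu, h1])
        refine ⟨C, hC, Or.inl ⟨hsub (by simp), fun hvC => h2 (hC.1 (hsub (by simp)) hvC hwv)⟩⟩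
      · obtain ⟨C, hC, hsub⟩ := exists_maxClique_superset Γ {w, v}
          (by simp [SimpleGraph.isClique_pair, hwv, h1])
        refine ⟨C, hC, Or.inr ⟨hsub (by simp), fun huC => h2 (hC.1 (hsub (by simp)) huC hwu)⟩⟩
    · obtain ⟨C, hC, hsub⟩ := exists_maxClique_superset Γ {u} (Γ.isClique_singleton u)
      refine ⟨C, hC, Or.inl ⟨hsub rfl, fun hvC => hadj (hC.1 (hsub rfl) hvC huv)⟩⟩
  · intro hsep u v hadj
    obtain ⟨C, hC, hxor⟩ := hsep u v hadj.ne
    rcases hxor with ⟨hu, hv⟩ | ⟨hv, hu⟩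
    · obtain ⟨w, hwu, hwv, h1, h2⟩ := maxClique_sep Γ hC hu hv hadj
      exact ⟨w, hwu, hwv, Or.inl ⟨h1, h2⟩⟩
    · obtain ⟨w, hwv, hwu, h1, h2⟩ := maxClique_sep Γ hC hv hu hadj.symm
      exact ⟨w, hwu, hwv, Or.inr ⟨h1, h2⟩⟩
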